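/- If |ω₁ - ω₂|/(2c) ≤ ν, then there exists θ ∈ [-χ, χ] such that sin θ + sin(θ/2) = (ω₁ - ω₂)/(2c). -/
import Mathlib

open Real

theorem exists_solution_in_Icc_chi
    (c ω₁ ω₂ χ ν : ℝ) (hc : 0 < c)
    (hχ : χ = 2 * arccos ((-1 + Real.sqrt 33) / 8))
    (hν : ν = sin χ + sin (χ / 2))
    (h : |ω₁ - ω₂| / (2 * c) ≤ ν) :
    ∃ θ ∈ Set.Icc (-χ) χ, sin θ + sin (θ / 2) = (ω₁ - ω₂) / (2 * c) := by
  set t := (ω₁ - ω₂) / (2 * c) with ht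
  have habs : |t| ≤ ν := by
    rw [ht, abs_div, abs_of_pos (by linarith : (0:ℝ) < 2 * c)]
    exact h
  have hχ0 : 0 ≤ χ := by
    rw [hχ]; have := Real.arccos_nonneg ((-1 + Real.sqrt 33) / 8); linarith
  have hle : -χ ≤ χ := by linarith
  have hcont : ContinuousOn (fun θ => sin θ + sin (θ / 2)) (Set.Icc (-χ) χ) :=
    (Real.continuous_sin.add (Real.continuous_sin.comp (continuous_id.div_const 2))).continuousOn
  have key := intermediate_value_Icc hle hcont
  have hmem : t ∈ Set.Icc ((fun θ => sin θ + sin (θ / 2)) (-χ))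
      ((fun θ => sin θ + sin (θ / 2)) χ) := by
    simp only [Real.sin_neg, neg_div, hν]
    rw [abs_le] at habs
    constructor <;> [linarith [habs.1]; linarith [habs.2]]
  obtain ⟨θ, hθ, hθ2⟩ := key hmem
  exact ⟨θ, hθ, hθ2⟩
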